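/- Fix an index α. Let a_{ij} (i ≠ j) be smooth on Ω satisfying the semihamiltonian conditions ∂_k a_{ij} = a_{ik} a_{kj} + a_{ij} a_{jk} − a_{ij} a_{ik} for all pairwise distinct i, j, k, and let μ^1,…,μ^n be smooth with ∂_j μ^i = a_{ij}(μ^j − μ^i) for all i ≠ j, with μ^α, ∂_α μ^α and 1 − μ^i/μ^α (i ≠ α) nonvanishing. Define A_{αi} = a_{αi} + ∂_i ln(∂_α μ^α/μ^α) for i ≠ α, and A_{ij} = a_{ij} + ∂_j ln(1 − μ^i/μ^α) for i ≠ α, j ≠ i (where ∂_j ln w means ∂_j w/w). Then for every pair of smooth functions u, q with ∂_i ∂_j u = a_{ij} ∂_i u + a_{ji} ∂_j u (i ≠ j) and ∂_i q = μ^i ∂_i u for all i, the adjoint Lévy transform U = u − q/μ^α satisfies ∂_i ∂_j U = A_{ij} ∂_i U + A_{ji} ∂_j U for all i ≠ j. -/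

import Mathlib

/-- Partial derivative with respect to the `i`-th coordinate. -/
noncomputable def pd {n : ℕ} {F : Type*} [NormedAddCommGroup F] [NormedSpace ℝ F]
    (i : Fin n) (w : (Fin n → ℝ) → F) : (Fin n → ℝ) → F :=
  fun p => fderiv ℝ w p (Pi.single i 1)

section Helpers

variable {n : ℕ} {f g : (Fin n → ℝ) → ℝ} {Ω : Set (Fin n → ℝ)} {p : Fin n → ℝ} {i j : Fin n}

lemma pd_congr (hΩ : IsOpen Ω) (hp : p ∈ Ω) (h : ∀ x ∈ Ω, f x = g x) (i : Fin n) :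
    pd i f p = pd i g p := by
  unfold pd
  congr 1
  apply Filter.EventuallyEq.fderiv_eq
  filter_upwards [hΩ.mem_nhds hp] with x hx using h x hx

lemma diffAt (hΩ : IsOpen Ω) (hf : ContDiffOn ℝ (⊤ : ℕ∞) f Ω) (hp : p ∈ Ω) :
    DifferentiableAt ℝ f p :=
  (hf.contDiffAt (hΩ.mem_nhds hp)).differentiableAt (by simp)

lemma contDiffAt_pd (hΩ : IsOpen Ω) (hf : ContDiffOn ℝ (⊤ : ℕ∞) f Ω) (hp : p ∈ Ω) (j : Fin n) :
    ContDiffAt ℝ (⊤ : ℕ∞) (pd j f) p := by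
  have h1 : ContDiffAt ℝ (⊤ : ℕ∞) (fderiv ℝ f) p :=
    (hf.contDiffAt (hΩ.mem_nhds hp)).fderiv_right (m := (⊤ : ℕ∞)) (by simp)
  exact h1.clm_apply contDiffAt_const

lemma contDiffOn_pd (hΩ : IsOpen Ω) (hf : ContDiffOn ℝ (⊤ : ℕ∞) f Ω) (j : Fin n) :
    ContDiffOn ℝ (⊤ : ℕ∞) (pd j f) Ω :=
  fun _x hx => (contDiffAt_pd hΩ hf hx j).contDiffWithinAt

lemma diffAt_pd (hΩ : IsOpen Ω) (hf : ContDiffOn ℝ (⊤ : ℕ∞) f Ω) (hp : p ∈ Ω) (j : Fin n) :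
    DifferentiableAt ℝ (pd j f) p :=
  (contDiffAt_pd hΩ hf hp j).differentiableAt (by simp)

lemma pd_comm (hΩ : IsOpen Ω) (hf : ContDiffOn ℝ (⊤ : ℕ∞) f Ω) (hp : p ∈ Ω) (i j : Fin n) :
    pd i (pd j f) p = pd j (pd i f) p := by
  have hsymm : IsSymmSndFDerivAt ℝ f p :=
    (hf.contDiffAt (hΩ.mem_nhds hp)).isSymmSndFDerivAt (by
      have h2 : (2 : WithTop ℕ∞) = ((2 : ℕ∞) : WithTop ℕ∞) := by norm_cast
      rw [h2, minSmoothness_of_isRCLikeNormedField]; exact WithTop.coe_le_coe.mpr le_top)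
  have hdf : DifferentiableAt ℝ (fderiv ℝ f) p :=
    ((hf.contDiffAt (hΩ.mem_nhds hp)).fderiv_right (m := (⊤ : ℕ∞))
      (by simp)).differentiableAt (by simp)
  have key : ∀ v w : Fin n → ℝ,
      fderiv ℝ (fun x => fderiv ℝ f x v) p w = fderiv ℝ (fderiv ℝ f) p w v := by
    intro v w
    rw [fderiv_clm_apply hdf (differentiableAt_const v)]
    simp
  show fderiv ℝ (fun x => fderiv ℝ f x (Pi.single j 1)) p (Pi.single i 1) = _
  rw [key, hsymm (Pi.single i 1) (Pi.single j 1), ← key]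
  rfl

lemma pd_add (hf : DifferentiableAt ℝ f p) (hg : DifferentiableAt ℝ g p) :
    pd i (fun x => f x + g x) p = pd i f p + pd i g p := by
  simp [pd, fderiv_fun_add hf hg]

lemma pd_sub (hf : DifferentiableAt ℝ f p) (hg : DifferentiableAt ℝ g p) :
    pd i (fun x => f x - g x) p = pd i f p - pd i g p := by
  simp [pd, fderiv_fun_sub hf hg]

lemma pd_mul (hf : DifferentiableAt ℝ f p) (hg : DifferentiableAt ℝ g p) :
    pd i (fun x => f x * g x) p = f p * pd i g p + pd i f p * g p := by
  simp [pd, fderiv_fun_mul hf hg]; ring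

lemma pd_const (c : ℝ) : pd i (fun _ => c) p = 0 := by
  simp [pd]

lemma pd_inv (hg : DifferentiableAt ℝ g p) (h0 : g p ≠ 0) :
    pd i (fun x => (g x)⁻¹) p = -pd i g p / g p ^ 2 := by
  have h : HasFDerivAt (fun x => (g x)⁻¹)
      ((ContinuousLinearMap.smulRight 1 (-(g p ^ 2)⁻¹)).comp (fderiv ℝ g p)) p :=
    (hasFDerivAt_inv h0).comp p hg.hasFDerivAt
  rw [pd, h.fderiv]
  simp [pd]
  ring

lemma pd_div (hf : DifferentiableAt ℝ f p) (hg : DifferentiableAt ℝ g p) (h0 : g p ≠ 0) :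
    pd i (fun x => f x / g x) p = (pd i f p * g p - f p * pd i g p) / g p ^ 2 := by
  have h : (fun x => f x / g x) = fun x => f x * (g x)⁻¹ := by
    funext x; rw [div_eq_mul_inv]
  rw [h, pd_mul (g := fun x => (g x)⁻¹) hf (hg.inv h0), pd_inv hg h0]
  field_simp
  ring

lemma diffDiv (hf : DifferentiableAt ℝ f p) (hg : DifferentiableAt ℝ g p) (h0 : g p ≠ 0) :
    DifferentiableAt ℝ (fun x => f x / g x) p := by
  simp only [div_eq_mul_inv]
  exact hf.mul (hg.inv h0)

lemma pd_sq (hg : DifferentiableAt ℝ g p) :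
    pd i (fun x => g x ^ 2) p = 2 * g p * pd i g p := by
  have h : (fun x => g x ^ 2) = fun x => g x * g x := by
    funext x; ring
  rw [h, pd_mul hg hg]
  ring

end Helpers

/-- the adjoint Lévy transform `U = u − q/μ^α` of any solution `u` of
`∂_i∂_j u = a_{ij}∂_i u + a_{ji}∂_j u` (with `q` the corresponding flux of the commuting
flow `μ`) satisfies the same system with the transformed coefficients `A = L*_α(a)`. -/
theorem stmt15 {n : ℕ} (Ω : Set (Fin n → ℝ)) (hΩ : IsOpen Ω) (α : Fin n)
    (a : Fin n → Fin n → (Fin n → ℝ) → ℝ)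
    (hasm : ∀ i j, i ≠ j → ContDiffOn ℝ (⊤ : ℕ∞) (a i j) Ω)
    (hsemi : ∀ i j k, i ≠ j → j ≠ k → i ≠ k → ∀ p ∈ Ω,
      pd k (a i j) p = a i k p * a k j p + a i j p * a j k p - a i j p * a i k p)
    (mu : Fin n → (Fin n → ℝ) → ℝ)
    (hmusm : ∀ i, ContDiffOn ℝ (⊤ : ℕ∞) (mu i) Ω)
    (hmueq : ∀ i j, i ≠ j → ∀ p ∈ Ω, pd j (mu i) p = a i j p * (mu j p - mu i p))
    (hmuα0 : ∀ p ∈ Ω, mu α p ≠ 0)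
    (hdmuα0 : ∀ p ∈ Ω, pd α (mu α) p ≠ 0)
    (hw0 : ∀ i, i ≠ α → ∀ p ∈ Ω, 1 - mu i p / mu α p ≠ 0)
    (A : Fin n → Fin n → (Fin n → ℝ) → ℝ)
    (hAα : ∀ i, i ≠ α → ∀ p,
      A α i p = a α i p
        + pd i (fun x => pd α (mu α) x / mu α x) p / (pd α (mu α) p / mu α p))
    (hAi : ∀ i j, i ≠ α → j ≠ i → ∀ p,
      A i j p = a i j p
        + pd j (fun x => 1 - mu i x / mu α x) p / (1 - mu i p / mu α p)) :
    ∀ u q : (Fin n → ℝ) → ℝ,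
      ContDiffOn ℝ (⊤ : ℕ∞) u Ω → ContDiffOn ℝ (⊤ : ℕ∞) q Ω →
      (∀ i j, i ≠ j → ∀ p ∈ Ω,
        pd i (pd j u) p = a i j p * pd i u p + a j i p * pd j u p) →
      (∀ i, ∀ p ∈ Ω, pd i q p = mu i p * pd i u p) →
      ∀ i j, i ≠ j → ∀ p ∈ Ω,
        pd i (pd j (fun x => u x - q x / mu α x)) p
          = A i j p * pd i (fun x => u x - q x / mu α x) p
            + A j i p * pd j (fun x => u x - q x / mu α x) p := by
  intro u q husm hqsm huu hq i j hij p hp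
  -- first-derivative formula, raw form
  have hU1 : ∀ (k : Fin n), ∀ x ∈ Ω, pd k (fun x => u x - q x / mu α x) x
      = pd k u x - (pd k q x * mu α x - q x * pd k (mu α) x) / (mu α x) ^ 2 := by
    intro k x hx
    rw [pd_sub (diffAt hΩ husm hx)
        (diffDiv (diffAt hΩ hqsm hx) (diffAt hΩ (hmusm α) hx) (hmuα0 x hx)),
      pd_div (diffAt hΩ hqsm hx) (diffAt hΩ (hmusm α) hx) (hmuα0 x hx)]
  -- first-derivative formula for k ≠ α
  have hE : ∀ k, k ≠ α → ∀ x ∈ Ω, pd k (fun x => u x - q x / mu α x) x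
      = (1 - mu k x / mu α x) * pd k u x
        + q x * (a α k x * (mu k x - mu α x)) / (mu α x) ^ 2 := by
    intro k hk x hx
    rw [hU1 k x hx, hq k x hx, hmueq α k (Ne.symm hk) x hx]
    have h0 := hmuα0 x hx
    field_simp
    ring
  -- first-derivative formula for k = α
  have hEα : ∀ x ∈ Ω, pd α (fun x => u x - q x / mu α x) x
      = q x * pd α (mu α) x / (mu α x) ^ 2 := by
    intro x hx
    rw [hU1 α x hx, hq α x hx]
    have h0 := hmuα0 x hx
    field_simp
    ring
  have h0 := hmuα0 p hp
  have hm := hdmuα0 p hp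
  have du : DifferentiableAt ℝ u p := diffAt hΩ husm hp
  have dq : DifferentiableAt ℝ q p := diffAt hΩ hqsm hp
  have dμ : DifferentiableAt ℝ (mu α) p := diffAt hΩ (hmusm α) hp
  have dm : DifferentiableAt ℝ (pd α (mu α)) p := diffAt_pd hΩ (hmusm α) hp α
  have dden : DifferentiableAt ℝ (fun x => mu α x ^ 2) p := dμ.pow 2
  -- the mixed case i ≠ α, j = α
  have claim : ∀ k, k ≠ α → pd k (pd α (fun x => u x - q x / mu α x)) p
      = A k α p * pd k (fun x => u x - q x / mu α x) p
        + A α k p * pd α (fun x => u x - q x / mu α x) p := by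
    intro k hkα
    have hwk := hw0 k hkα p hp
    have hsubk : mu α p - mu k p ≠ 0 := by
      have hrw : mu α p - mu k p = mu α p * (1 - mu k p / mu α p) := by field_simp
      rw [hrw]; exact mul_ne_zero h0 hwk
    have dμk : DifferentiableAt ℝ (mu k) p := diffAt hΩ (hmusm k) hp
    rw [pd_congr hΩ hp hEα k,
      pd_div (f := fun x => q x * pd α (mu α) x) (dq.mul dm) dden (pow_ne_zero 2 h0),
      pd_mul dq dm, pd_sq dμ, hq k p hp,
      hAi k α hkα (Ne.symm hkα) p, hAα k hkα p,
      pd_sub (differentiableAt_const (1 : ℝ)) (diffDiv dμk dμ h0),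
      pd_const,
      pd_div dμk dμ h0,
      hmueq k α hkα p hp,
      pd_div dm dμ h0,
      hmueq α k (Ne.symm hkα) p hp,
      hE k hkα p hp, hEα p hp]
    field_simp [hsubk]
    ring
  rcases eq_or_ne j α with hjα | hjα
  · have hiα : i ≠ α := hjα ▸ hij
    rw [hjα]
    exact claim i hiα
  · rcases eq_or_ne i α with hiα | hiα
    · -- i = α : reduce to the mixed case by symmetry of second derivatives
      have hUsm : ContDiffOn ℝ (⊤ : ℕ∞) (fun x => u x - q x / mu α x) Ω :=
        husm.sub (hqsm.div (hmusm α) hmuα0)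
      rw [hiα, pd_comm hΩ hUsm hp α j, claim j hjα]
      ring
    · -- generic case : i ≠ α, j ≠ α
      have hwi := hw0 i hiα p hp
      have hwj := hw0 j hjα p hp
      have dμi : DifferentiableAt ℝ (mu i) p := diffAt hΩ (hmusm i) hp
      have dμj : DifferentiableAt ℝ (mu j) p := diffAt hΩ (hmusm j) hp
      have dju : DifferentiableAt ℝ (pd j u) p := diffAt_pd hΩ husm hp j
      have daj : DifferentiableAt ℝ (a α j) p := diffAt hΩ (hasm α j (Ne.symm hjα)) hp
      have dwj : DifferentiableAt ℝ (fun x => 1 - mu j x / mu α x) p :=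
        (differentiableAt_const (1 : ℝ)).sub (diffDiv dμj dμ h0)
      have dnum : DifferentiableAt ℝ (fun x => q x * (a α j x * (mu j x - mu α x))) p :=
        dq.mul (daj.mul (dμj.sub dμ))
      have hsubi : mu α p - mu i p ≠ 0 := by
        have hrw : mu α p - mu i p = mu α p * (1 - mu i p / mu α p) := by field_simp
        rw [hrw]; exact mul_ne_zero h0 hwi
      have hsubj : mu α p - mu j p ≠ 0 := by
        have hrw : mu α p - mu j p = mu α p * (1 - mu j p / mu α p) := by field_simp
        rw [hrw]; exact mul_ne_zero h0 hwj
      rw [pd_congr hΩ hp (hE j hjα) i,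
        pd_add (f := fun x => (1 - mu j x / mu α x) * pd j u x) (dwj.mul dju) (diffDiv dnum dden (pow_ne_zero 2 h0)),
        pd_mul dwj dju,
        pd_div dnum dden (pow_ne_zero 2 h0),
        pd_mul (g := fun x => a α j x * (mu j x - mu α x)) dq (daj.mul (dμj.sub dμ)),
        pd_mul (g := fun x => mu j x - mu α x) daj (dμj.sub dμ),
        pd_sub dμj dμ,
        pd_sq dμ,
        hAi i j hiα (Ne.symm hij) p,
        hAi j i hjα hij p,
        pd_sub (differentiableAt_const (1 : ℝ)) (diffDiv dμj dμ h0),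
        pd_sub (differentiableAt_const (1 : ℝ)) (diffDiv dμi dμ h0),
        pd_const, pd_const,
        pd_div dμj dμ h0,
        pd_div dμi dμ h0,
        huu i j hij p hp,
        hq i p hp,
        hsemi α j i (Ne.symm hjα) (Ne.symm hij) (Ne.symm hiα) p hp,
        hmueq j i (Ne.symm hij) p hp,
        hmueq i j hij p hp,
        hmueq α i (Ne.symm hiα) p hp,
        hmueq α j (Ne.symm hjα) p hp,
        hE i hiα p hp, hE j hjα p hp]
      field_simp [hsubi, hsubj]
      ring
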